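/- Let L be an LTS, ψ a conjunction-free formula in canonical form, ρ a run of L, and k ≥ |S| + 1 such that (ρ,k) ⊭ F_p^∞ ψ. Then there exists a ψ-avoiding sequence that is realized by ρ. -/

import Mathlib

open scoped Classical
open MeasureTheory

/-- A labelled transition system: a finite set of states `S`, an initial state,
a transition relation in which every state has at least one successor, and a
labeling of states by sets of atomic propositions. -/
structure LTS (S AP : Type) where
  init : S
  T : S → S → Prop
  lbl : S → Set AP
  succ_nonempty : ∀ s : S, ∃ t : S, T s t

variable {S AP : Type}

/-- A run of an LTS: an infinite sequence of states following the transitions. -/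
def IsRun (L : LTS S AP) (ρ : ℕ → S) : Prop := ∀ i : ℕ, L.T (ρ i) (ρ (i + 1))

/-- The shifted run `ρ[i..]`. -/
def shift (ρ : ℕ → S) (i : ℕ) : ℕ → S := fun n => ρ (n + i)

/-- A state formula: a (possibly empty, i.e. `false`) disjunction of literals,
each literal being a polarity (`true` = positive) paired with an atomic proposition. -/
abbrev StateFormula (AP : Type) := List (Bool × AP)

/-- A state `s` satisfies a state formula `θ`. -/
def SatState (L : LTS S AP) (θ : StateFormula AP) (s : S) : Prop :=
  ∃ p ∈ θ, if p.1 then p.2 ∈ L.lbl s else p.2 ∉ L.lbl s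

/-- A conjunction-free formula in canonical form `ψ = θ ∨ ⋁ F_p^∞ ψᵢ`, identified
with its tree `T(ψ)`: a root labeled by the state formula `θ` whose children are
the trees of the `ψᵢ`. -/
inductive CTree (AP : Type) : Type where
  | node : StateFormula AP → List (CTree AP) → CTree AP

/-- Satisfaction `(ρ, k) ⊨ ψ` for a canonical conjunction-free formula
`ψ = θ ∨ ⋁ F_p^∞ ψᵢ`. -/
def SatC (L : LTS S AP) : CTree AP → (ℕ → S) → ℕ → Prop
  | .node θ cs, ρ, k =>
      SatState L θ (ρ 0) ∨
      ∃ c ∈ cs.attach, ∀ i : ℕ, ∃ j ≤ k, SatC L c.1 (shift ρ (i + j)) k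
termination_by t => sizeOf t
decreasing_by
  have := List.sizeOf_lt_of_mem c.2
  simp only [CTree.node.sizeOf_spec]
  omega

/-- Satisfaction `(ρ, k) ⊨ F_p^∞ ψ` for a canonical conjunction-free formula `ψ`. -/
def SatFinfC (L : LTS S AP) (t : CTree AP) (ρ : ℕ → S) (k : ℕ) : Prop :=
  ∀ i : ℕ, ∃ j ≤ k, SatC L t (shift ρ (i + j)) k

/-- `Interleave l₁ l₂ l`: `l` is an interleaving (shuffle) of `l₁` and `l₂`. -/
inductive Interleave {α : Type} : List α → List α → List α → Prop where
  | nil : Interleave [] [] []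
  | left {a : α} {l₁ l₂ l : List α} : Interleave l₁ l₂ l → Interleave (a :: l₁) l₂ (a :: l)
  | right {a : α} {l₁ l₂ l : List α} : Interleave l₁ l₂ l → Interleave l₁ (a :: l₂) (a :: l)

mutual
/-- `LinExt t l`: the list `l` of state-formula labels enumerates the nodes of the
tree `t` in a linear order extending the ancestor order of the tree (the root comes
first, followed by an interleaving of linear extensions of the children's subtrees). -/
inductive LinExt {AP : Type} : CTree AP → List (StateFormula AP) → Prop where
  | node {θ : StateFormula AP} {cs : List (CTree AP)} {l : List (StateFormula AP)} :
      LinExtF cs l → LinExt (.node θ cs) (θ :: l)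

/-- Linear extensions of a forest: interleavings of linear extensions of its trees. -/
inductive LinExtF {AP : Type} : List (CTree AP) → List (StateFormula AP) → Prop where
  | nil : LinExtF [] []
  | cons {t : CTree AP} {ts : List (CTree AP)} {l₁ l₂ l : List (StateFormula AP)} :
      LinExt t l₁ → LinExtF ts l₂ → Interleave l₁ l₂ l → LinExtF (t :: ts) l
end

/-- A (nonempty) finite path of the LTS. -/
def IsPath (L : LTS S AP) (u : List S) : Prop := u ≠ [] ∧ u.Chain' L.T

/-- A loop: a finite path with at least one transition whose first and last states coincide. -/
def IsLoop (L : LTS S AP) (u : List S) : Prop :=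
  2 ≤ u.length ∧ u.Chain' L.T ∧ u.head? = u.getLast?

/-- The set `occ u` of states occurring in a finite sequence. -/
def occ (u : List S) : Set S := {s | s ∈ u}

/-- A `ψ`-avoiding sequence: a linear ordering of the nodes of `T(ψ)` extending the
ancestor order together with, for each node labeled by a state formula `θ`, a loop
whose set of states is a `θ`-avoiding cycle. -/
structure AvoidingSeq (L : LTS S AP) (ψ : CTree AP) where
  labels : List (StateFormula AP)
  loops : List (List S)
  linext : LinExt ψ labels
  length_eq : loops.length = labels.length
  isLoop : ∀ u ∈ loops, IsLoop L u
  avoid : ∀ p ∈ loops.zip labels, ∀ s ∈ p.1, ¬ SatState L p.2 s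

/-- A run `ρ` realizes an avoiding sequence `U = u₀, …, u_l`: there are positions
`j₀ ≤ j₁ ≤ … ≤ j_l` with `ρ (jᵢ) ∈ occ uᵢ` for every `i`. -/
def RealizedBy {L : LTS S AP} {ψ : CTree AP} (U : AvoidingSeq L ψ) (ρ : ℕ → S) : Prop :=
  ∃ j : ℕ → ℕ, Monotone j ∧ ∀ i : Fin U.loops.length, ρ (j i) ∈ occ (U.loops.get i)
/- ### Auxiliary lemmas for the proof -/

theorem interleave_nil_left {α : Type} (l : List α) : Interleave [] l l := by
  induction l with
  | nil => exact .nil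
  | cons a l ih => exact .right ih

theorem interleave_nil_right {α : Type} (l : List α) : Interleave l [] l := by
  induction l with
  | nil => exact .nil
  | cons a l ih => exact .left ih

theorem interleave_map {α β : Type} (g : α → β) {l₁ l₂ l : List α}
    (h : Interleave l₁ l₂ l) : Interleave (l₁.map g) (l₂.map g) (l.map g) := by
  induction h with
  | nil => exact .nil
  | left _ ih => exact .left ih
  | right _ ih => exact .right ih

theorem interleave_merge {α : Type} (f : α → ℕ) :
    ∀ (l₁ l₂ : List α), l₁.Pairwise (fun x y => f x ≤ f y) →
      l₂.Pairwise (fun x y => f x ≤ f y) →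
    ∃ l, Interleave l₁ l₂ l ∧ l.Pairwise (fun x y => f x ≤ f y) ∧
      ∀ x ∈ l, x ∈ l₁ ∨ x ∈ l₂
  | [], l₂, _, h₂ => ⟨l₂, interleave_nil_left l₂, h₂, fun x hx => .inr hx⟩
  | a :: l₁, [], h₁, _ => ⟨a :: l₁, interleave_nil_right _, h₁, fun x hx => .inl hx⟩
  | a :: l₁, b :: l₂, h₁, h₂ => by
    rcases le_or_gt (f a) (f b) with hab | hab
    · obtain ⟨l, hi, hp, hm⟩ := interleave_merge f l₁ (b :: l₂) h₁.of_cons h₂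
      refine ⟨a :: l, .left hi, hp.cons ?_, ?_⟩
      · intro y hy
        rcases hm y hy with hy | hy
        · exact List.rel_of_pairwise_cons h₁ hy
        · rcases List.mem_cons.1 hy with rfl | hy
          · exact hab
          · exact hab.trans (List.rel_of_pairwise_cons h₂ hy)
      · intro x hx
        rcases List.mem_cons.1 hx with rfl | hx
        · exact .inl (List.mem_cons_self)
        · rcases hm x hx with hx | hx
          · exact .inl (List.mem_cons_of_mem _ hx)
          · exact .inr hx
    · obtain ⟨l, hi, hp, hm⟩ := interleave_merge f (a :: l₁) l₂ h₁ h₂.of_cons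
      refine ⟨b :: l, .right hi, hp.cons ?_, ?_⟩
      · intro y hy
        rcases hm y hy with hy | hy
        · rcases List.mem_cons.1 hy with rfl | hy
          · exact hab.le
          · exact hab.le.trans (List.rel_of_pairwise_cons h₁ hy)
        · exact List.rel_of_pairwise_cons h₂ hy
      · intro x hx
        rcases List.mem_cons.1 hx with rfl | hx
        · exact .inr (List.mem_cons_self)
        · rcases hm x hx with hx | hx
          · exact .inl hx
          · exact .inr (List.mem_cons_of_mem _ hx)
termination_by l₁ l₂ => l₁.length + l₂.length

theorem le_foldr_max : ∀ (P : List ℕ), ∀ x ∈ P, x ≤ P.foldr max 0 := by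
  intro P
  induction P with
  | nil => intro x hx; cases hx
  | cons a P ih =>
    intro x hx
    rcases List.mem_cons.1 hx with rfl | hx
    · exact le_max_left _ _
    · exact (ih x hx).trans (le_max_right _ _)

theorem shift_shift (ρ : ℕ → S) (a b : ℕ) : shift (shift ρ a) b = shift ρ (b + a) := by
  funext n
  simp [shift, Nat.add_assoc]

/-- A "good entry": a loop, avoiding its state formula, with a position `≥ N`
at which `ρ` visits the loop. -/
def GoodEntry (L : LTS S AP) (ρ : ℕ → S) (N : ℕ)
    (x : StateFormula AP × List S × ℕ) : Prop :=
  N ≤ x.2.2 ∧ IsLoop L x.2.1 ∧ (∀ s ∈ x.2.1, ¬ SatState L x.1 s) ∧ ρ x.2.2 ∈ occ x.2.1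

theorem main_good [Fintype S] (L : LTS S AP) (ρ : ℕ → S) (hρ : IsRun L ρ) (k : ℕ)
    (hk : Fintype.card S + 1 ≤ k) :
    ∀ (n : ℕ) (t : CTree AP), sizeOf t ≤ n → ∀ N, ¬ SatFinfC L t (shift ρ N) k →
    ∃ l : List (StateFormula AP × List S × ℕ), LinExt t (l.map Prod.fst) ∧
      l.Pairwise (fun x y => x.2.2 ≤ y.2.2) ∧ ∀ x ∈ l, GoodEntry L ρ N x := by
  intro n
  induction n with
  | zero =>
    intro t ht
    exfalso
    cases t with
    | node θ cs => simp [CTree.node.sizeOf_spec] at ht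
  | succ n ih =>
    -- forest version, from the induction hypothesis
    have forest : ∀ (cs : List (CTree AP)), (∀ c ∈ cs, sizeOf c ≤ n) →
        ∀ N, (∀ c ∈ cs, ¬ SatFinfC L c (shift ρ N) k) →
        ∃ l : List (StateFormula AP × List S × ℕ), LinExtF cs (l.map Prod.fst) ∧
          l.Pairwise (fun x y => x.2.2 ≤ y.2.2) ∧ ∀ x ∈ l, GoodEntry L ρ N x := by
      intro cs
      induction cs with
      | nil => exact fun _ N _ => ⟨[], .nil, .nil, fun x hx => absurd hx List.not_mem_nil⟩
      | cons c cs ihcs =>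
        intro hsz N hns
        obtain ⟨l₁, hle₁, hp₁, hg₁⟩ := ih c (hsz c (List.mem_cons_self)) N
          (hns c (List.mem_cons_self))
        obtain ⟨l₂, hle₂, hp₂, hg₂⟩ := ihcs (fun c hc => hsz c (List.mem_cons_of_mem _ hc)) N
          (fun c hc => hns c (List.mem_cons_of_mem _ hc))
        obtain ⟨l, hi, hp, hm⟩ := interleave_merge (fun x => x.2.2) l₁ l₂ hp₁ hp₂
        refine ⟨l, .cons hle₁ hle₂ (interleave_map Prod.fst hi), hp, ?_⟩
        intro x hx
        rcases hm x hx with hx | hx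
        · exact hg₁ x hx
        · exact hg₂ x hx
    intro t ht N hN
    obtain ⟨θ, cs⟩ := t
    -- extract the bad window
    unfold SatFinfC at hN
    push_neg at hN
    obtain ⟨i, hi⟩ := hN
    set A := N + i with hA
    have hwin : ∀ j ≤ k, ¬ SatState L θ (ρ (A + j)) ∧
        ∀ c ∈ cs, ¬ SatFinfC L c (shift ρ (A + j)) k := by
      intro j hj
      have h1 := hi j hj
      rw [shift_shift, show i + j + N = A + j from by omega] at h1
      rw [SatC] at h1
      rw [not_or] at h1
      constructor
      · intro hs
        exact h1.1 (by simpa [shift] using hs)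
      · intro c hc hsat
        exact h1.2 ⟨⟨c, hc⟩, List.mem_attach _ _, hsat⟩
    -- pigeonhole: a repeated state in the window
    have hpig : ∃ j₁ j₂, j₁ < j₂ ∧ j₂ ≤ Fintype.card S ∧ ρ (A + j₁) = ρ (A + j₂) := by
      have hcard : (Finset.univ : Finset S).card <
          (Finset.range (Fintype.card S + 1)).card := by simp
      obtain ⟨a, ha, b, hb, hne, heq⟩ :=
        Finset.exists_ne_map_eq_of_card_lt_of_maps_to hcard
          (fun a _ => Finset.mem_univ (ρ (A + a)))
      rw [Finset.mem_range] at ha hb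
      rcases lt_or_gt_of_ne hne with hlt | hlt
      · exact ⟨a, b, hlt, by omega, heq⟩
      · exact ⟨b, a, hlt, by omega, heq.symm⟩
    obtain ⟨j₁, j₂, hj12, hj2, hrep⟩ := hpig
    set d := j₂ - j₁ with hd
    set u : List S := (List.range (d + 1)).map (fun m => ρ (A + j₁ + m)) with hu
    have humem : ∀ s ∈ u, ∃ m ≤ d, s = ρ (A + j₁ + m) := by
      intro s hs
      rw [hu, List.mem_map] at hs
      obtain ⟨m, hm, rfl⟩ := hs
      exact ⟨m, by simpa using Nat.lt_succ_iff.1 (List.mem_range.1 hm), rfl⟩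
    have hloop : IsLoop L u := by
      refine ⟨by simp [hu]; omega, ?_, ?_⟩
      · rw [hu]
        show List.IsChain L.T _
        rw [List.isChain_map]
        rw [show d + 1 = d + 1 from rfl, List.isChain_range_succ]
        intro m _
        exact hρ (A + j₁ + m)
      · have hhead : u.head? = some (ρ (A + j₁)) := by
          rw [hu, List.range_succ_eq_map]
          simp
        have hlast : u.getLast? = some (ρ (A + j₁ + d)) := by
          rw [hu, List.range_succ, List.map_append]
          simp
        rw [hhead, hlast, show A + j₁ + d = A + j₂ from by omega, ← hrep]
    have havoid : ∀ s ∈ u, ¬ SatState L θ s := by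
      intro s hs
      obtain ⟨m, hm, rfl⟩ := humem s hs
      have : j₁ + m ≤ k := by omega
      have := (hwin (j₁ + m) this).1
      rwa [show A + (j₁ + m) = A + j₁ + m from by omega] at this
    -- children
    have hch : ∀ c ∈ cs, ¬ SatFinfC L c (shift ρ (A + k)) k :=
      fun c hc => (hwin k le_rfl).2 c hc
    have hsz : ∀ c ∈ cs, sizeOf c ≤ n := by
      intro c hc
      have h1 := List.sizeOf_lt_of_mem hc
      simp only [CTree.node.sizeOf_spec] at ht
      omega
    obtain ⟨l₂, hle₂, hp₂, hg₂⟩ := forest cs hsz (A + k) hch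
    refine ⟨(θ, u, A + j₁) :: l₂, ?_, ?_, ?_⟩
    · exact .node hle₂
    · refine hp₂.cons ?_
      intro y hy
      have := (hg₂ y hy).1
      show A + j₁ ≤ y.2.2
      omega
    · intro x hx
      rcases List.mem_cons.1 hx with rfl | hx
      · refine ⟨show N ≤ A + j₁ by omega, hloop, havoid, ?_⟩
        show ρ (A + j₁) ∈ u
        rw [hu, List.mem_map]
        exact ⟨0, by simp, by simp⟩
      · obtain ⟨h1, h2, h3, h4⟩ := hg₂ x hx
        exact ⟨by omega, h2, h3, h4⟩

/-- If `ψ` is a conjunction-free canonical formula, `ρ` a run of `L`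
and `k ≥ |S| + 1` with `(ρ,k) ⊭ F_p^∞ ψ`, then there is a `ψ`-avoiding sequence
realized by `ρ`. -/
theorem avoiding_sequence_of_counterexample [Fintype S] (L : LTS S AP) (ψ : CTree AP)
    (ρ : ℕ → S) (hρ : IsRun L ρ) (k : ℕ) (hk : Fintype.card S + 1 ≤ k)
    (h : ¬ SatFinfC L ψ ρ k) :
    ∃ U : AvoidingSeq L ψ, RealizedBy U ρ := by
  have h0 : ¬ SatFinfC L ψ (shift ρ 0) k := by
    have he : shift ρ 0 = ρ := rfl
    rwa [he]
  obtain ⟨l, hle, hp, hg⟩ := main_good L ρ hρ k hk (sizeOf ψ) ψ le_rfl 0 h0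
  set P : List ℕ := l.map (fun x => x.2.2) with hP
  set B : ℕ := P.foldr max 0 with hB
  have hPp : P.Pairwise (· ≤ ·) := List.pairwise_map.2 hp
  refine ⟨⟨l.map Prod.fst, l.map (fun x => x.2.1), hle, by simp, ?_, ?_⟩, ?_⟩
  · intro u hu
    rw [List.mem_map] at hu
    obtain ⟨x, hx, rfl⟩ := hu
    exact (hg x hx).2.1
  · intro p hp2 s hs
    rw [List.zip_map'] at hp2
    rw [List.mem_map] at hp2
    obtain ⟨x, hx, rfl⟩ := hp2
    exact (hg x hx).2.2.1 s hs
  · refine ⟨fun n => P.getD n B, ?_, ?_⟩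
    · intro n m hnm
      by_cases hm : m < P.length
      · have hn : n < P.length := lt_of_le_of_lt hnm hm
        simp only [List.getD_eq_getElem _ _ hn, List.getD_eq_getElem _ _ hm]
        rcases eq_or_lt_of_le hnm with rfl | hlt
        · exact le_rfl
        · exact List.pairwise_iff_getElem.1 hPp n m hn hm hlt
      · simp only [List.getD_eq_default _ _ (le_of_not_gt hm)]
        by_cases hn : n < P.length
        · simp only [List.getD_eq_getElem _ _ hn]
          exact le_foldr_max P _ (List.getElem_mem hn)
        · simp only [List.getD_eq_default _ _ (le_of_not_gt hn)]
          exact le_rfl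
    · intro i
      have hi : (i : ℕ) < l.length := by simpa using i.isLt
      have hiP : (i : ℕ) < P.length := by simpa [hP] using hi
      show ρ (P.getD (i : ℕ) B) ∈ _
      rw [List.getD_eq_getElem _ _ hiP]
      have hmem := (hg (l[(i : ℕ)]) (List.getElem_mem hi)).2.2.2
      simpa [hP, List.get_eq_getElem] using hmem
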